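/- Let S be a compact metric space, U the closed unit ball of ℝ^k, and f : S × U → ℝ^k a continuous map such that the image f(s,U) := {f(s,u) : u ∈ U} is convex for every s ∈ S. Define the set-valued map F : S → {subsets of ℝ^k} by F(s) = f(s,U). Then for every Borel probability measure μ on S, the Aumann integral ∫_S F dμ equals the set { ∫_{S×U} f(s,u) ν(ds,du) : ν a Borel probability measure on S × U whose marginal on S equals μ }. -/

import Mathlib

open MeasureTheory Metric Filter Topology
open scoped Pointwise NNReal ENNReal RealInnerProductSpace

abbrev Euc (n : ℕ) : Type := EuclideanSpace ℝ (Fin n)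

/-- The Aumann integral of a set-valued map `G` with respect to a measure `μ`: the set of
integrals of `μ`-integrable measurable selections of `G`. -/
def aumannIntegral {W : Type*} [MeasurableSpace W] {E : Type*} [NormedAddCommGroup E]
    [NormedSpace ℝ E] [MeasurableSpace E] (μ : Measure W) (G : W → Set E) : Set E :=
  {v | ∃ g : W → E, Measurable g ∧ Integrable g μ ∧ (∀ w, g w ∈ G w) ∧ (∫ w, g w ∂μ) = v}

section Sel
variable {S : Type*} {U : Type*} [MeasurableSpace S] [MetricSpace U] [CompactSpace U]
  [Nonempty U] [TopologicalSpace.SeparableSpace U]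

/-- inf of `φ` over the zero set of `ρ s`, as an `ℝ≥0∞` value. -/
noncomputable def selInf (ρ : S → U → ℝ) (φ : U → ℝ) (s : S) : ℝ≥0∞ :=
  ⨅ u ∈ {u | ρ s u = 0}, ENNReal.ofReal (φ u)

lemma selInf_exists_min {ρ : S → U → ℝ} {φ : U → ℝ}
    (hc : ∀ s, Continuous (ρ s)) (hex : ∀ s, ∃ u, ρ s u = 0) (hφ : Continuous φ) (s : S) :
    ∃ u, ρ s u = 0 ∧ selInf ρ φ s = ENNReal.ofReal (φ u) := by
  have hZc : IsCompact {u | ρ s u = 0} :=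
    (isClosed_singleton.preimage (hc s)).isCompact
  obtain ⟨u₀, hu₀, hmin⟩ := hZc.exists_isMinOn (hex s) hφ.continuousOn
  refine ⟨u₀, hu₀, le_antisymm (iInf₂_le u₀ hu₀) ?_⟩
  exact le_iInf₂ fun u hu => ENNReal.ofReal_le_ofReal (hmin hu)

lemma measurable_selInf {ρ : S → U → ℝ} {φ : U → ℝ}
    (hm : ∀ u, Measurable fun s => ρ s u) (hc : ∀ s, Continuous (ρ s))
    (hnn : ∀ s u, 0 ≤ ρ s u) (hex : ∀ s, ∃ u, ρ s u = 0)
    (hφ : Continuous φ) (hφnn : ∀ u, 0 ≤ φ u) :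
    Measurable (selInf ρ φ) := by
  obtain ⟨e, he⟩ := TopologicalSpace.exists_dense_seq U
  set ψ : ℕ → ℕ → S → ℝ≥0∞ := fun n m s =>
    if ρ s (e m) < 1 / (n + 1) then ENNReal.ofReal (φ (e m)) else ⊤ with hψ
  have key : selInf ρ φ = fun s => ⨆ n, ⨅ m, ψ n m s := by
    funext s
    have hinnerle : ∀ n, ∀ u, ρ s u = 0 → (⨅ m, ψ n m s) ≤ ENNReal.ofReal (φ u) := by
      intro n u hu
      refine ENNReal.le_of_forall_pos_le_add fun ε hε _ => ?_
      have hV : IsOpen {v | ρ s v < 1 / (n + 1) ∧ φ v < φ u + ε} :=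
        ((isOpen_lt (hc s) continuous_const)).inter (isOpen_lt hφ continuous_const)
      have hne : ({v | ρ s v < 1 / (n + 1) ∧ φ v < φ u + ε}).Nonempty := by
        refine ⟨u, ?_, ?_⟩
        · rw [hu]; positivity
        · simpa using (by positivity : (0:ℝ) < ε)
      obtain ⟨m, hm1, hm2⟩ := he.exists_mem_open hV hne
      refine iInf_le_of_le m ?_
      rw [hψ]; simp only [if_pos hm1]
      calc ENNReal.ofReal (φ (e m)) ≤ ENNReal.ofReal (φ u + ε) :=
            ENNReal.ofReal_le_ofReal hm2.le
        _ = ENNReal.ofReal (φ u) + ENNReal.ofReal ε :=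
            ENNReal.ofReal_add (hφnn u) ε.coe_nonneg
        _ = ENNReal.ofReal (φ u) + ε := by rw [ENNReal.ofReal_coe_nnreal]
    obtain ⟨u₀, hu₀, hmin⟩ := selInf_exists_min hc hex hφ s
    have hfin : ∀ n, (⨅ m, ψ n m s) ≠ ⊤ := fun n =>
      ((hinnerle n u₀ hu₀).trans_lt ENNReal.ofReal_lt_top).ne
    refine le_antisymm ?_ (iSup_le fun n => le_iInf₂ fun u hu => hinnerle n u hu)
    -- selInf ≤ ⨆⨅
    set L := ⨆ n, ⨅ m, ψ n m s with hL
    by_cases hLtop : L = ⊤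
    · rw [hLtop]; exact le_top
    -- choose near-minimizers
    have hch : ∀ n : ℕ, ∃ m, ρ s (e m) < 1 / (n + 1) ∧
        φ (e m) ≤ L.toReal + 1 / (n + 1) := by
      intro n
      have hlt : (⨅ m, ψ n m s) < (⨅ m, ψ n m s) + ENNReal.ofReal (1 / (n + 1)) :=
        ENNReal.lt_add_right (hfin n) (by positivity)
      obtain ⟨m, hmlt⟩ := iInf_lt_iff.mp hlt
      have hmtop : ψ n m s ≠ ⊤ := by
        refine hmlt.trans_le ?_ |>.ne ; exact le_top
      have hvalid : ρ s (e m) < 1 / (n + 1) := by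
        by_contra h
        rw [hψ] at hmtop; simp only [if_neg h] at hmtop; exact hmtop rfl
      refine ⟨m, hvalid, ?_⟩
      have hval : ENNReal.ofReal (φ (e m)) ≤ L + ENNReal.ofReal (1 / (n + 1)) := by
        have : ψ n m s ≤ L + ENNReal.ofReal (1 / (n + 1)) :=
          hmlt.le.trans (add_le_add_left (le_iSup (fun n => ⨅ m, ψ n m s) n) _)
        rw [hψ] at this; simp only [if_pos hvalid] at this; exact this
      have := ENNReal.toReal_mono (by
        exact ENNReal.add_ne_top.mpr ⟨hLtop, ENNReal.ofReal_ne_top⟩) hval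
      rwa [ENNReal.toReal_ofReal (hφnn _), ENNReal.toReal_add hLtop ENNReal.ofReal_ne_top,
        ENNReal.toReal_ofReal (by positivity)] at this
    choose mm hmm1 hmm2 using hch
    obtain ⟨ustar, -, g, hg, hgt⟩ := isCompact_univ.tendsto_subseq
      (fun n => (Set.mem_univ (e (mm n))))
    have haux : Tendsto (fun j : ℕ => 1 / ((j : ℝ) + 1)) atTop (𝓝 0) :=
      tendsto_one_div_add_atTop_nhds_zero_nat
    have haux' : Tendsto (fun j : ℕ => 1 / ((g j : ℝ) + 1)) atTop (𝓝 0) :=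
      haux.comp hg.tendsto_atTop
    have hρstar : ρ s ustar = 0 := by
      have h1 : Tendsto (fun j => ρ s (e (mm (g j)))) atTop (𝓝 (ρ s ustar)) :=
        ((hc s).tendsto ustar).comp hgt
    -- squeeze
      have hle : ρ s ustar ≤ 0 := by
        refine le_of_tendsto_of_tendsto h1 haux' ?_
        filter_upwards with j
        exact (hmm1 (g j)).le
      exact le_antisymm hle (hnn s ustar)
    have hφstar : φ ustar ≤ L.toReal := by
      have h1 : Tendsto (fun j => φ (e (mm (g j)))) atTop (𝓝 (φ ustar)) :=
        (hφ.tendsto ustar).comp hgt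
      have h2 : Tendsto (fun j : ℕ => L.toReal + 1 / ((g j : ℝ) + 1)) atTop (𝓝 (L.toReal + 0)) :=
        tendsto_const_nhds.add haux'
      rw [add_zero] at h2
      refine le_of_tendsto_of_tendsto h1 h2 ?_
      filter_upwards with j
      exact hmm2 (g j)
    calc selInf ρ φ s ≤ ENNReal.ofReal (φ ustar) := iInf₂_le ustar hρstar
      _ ≤ ENNReal.ofReal L.toReal := ENNReal.ofReal_le_ofReal hφstar
      _ = L := ENNReal.ofReal_toReal hLtop
  rw [key]
  refine Measurable.iSup fun n => Measurable.iInf fun m => Measurable.ite ?_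
    measurable_const measurable_const
  exact measurableSet_lt (hm (e m)) measurable_const

noncomputable def selTower (ρ0 : S → U → ℝ) (φ : ℕ → U → ℝ) : ℕ → S → U → ℝ
  | 0 => ρ0
  | i + 1 => fun s u => selTower ρ0 φ i s u +
      |φ i u - (selInf (selTower ρ0 φ i) (φ i) s).toReal|

variable {ρ0 : S → U → ℝ} {φ : ℕ → U → ℝ}

lemma selTower_inv
    (hm : ∀ u, Measurable fun s => ρ0 s u) (hc : ∀ s, Continuous (ρ0 s))
    (hnn : ∀ s u, 0 ≤ ρ0 s u) (hex : ∀ s, ∃ u, ρ0 s u = 0)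
    (hφc : ∀ i, Continuous (φ i)) (hφnn : ∀ i u, 0 ≤ φ i u) : ∀ i : ℕ,
    (∀ u, Measurable fun s => selTower ρ0 φ i s u) ∧ (∀ s, Continuous (selTower ρ0 φ i s)) ∧
      (∀ s u, 0 ≤ selTower ρ0 φ i s u) ∧ (∀ s, ∃ u, selTower ρ0 φ i s u = 0) := by
  intro i
  induction i with
  | zero => exact ⟨hm, hc, hnn, hex⟩
  | succ i ih =>
    obtain ⟨ihm, ihc, ihnn, ihex⟩ := ih
    have hmeasInf : Measurable (selInf (selTower ρ0 φ i) (φ i)) :=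
      measurable_selInf ihm ihc ihnn ihex (hφc i) (hφnn i)
    refine ⟨?_, ?_, ?_, ?_⟩
    · intro u
      exact (ihm u).add ((measurable_const.sub hmeasInf.ennreal_toReal).abs)
    · intro s
      exact (ihc s).add (((hφc i).sub continuous_const).abs)
    · intro s u
      exact add_nonneg (ihnn s u) (abs_nonneg _)
    · intro s
      obtain ⟨u, hu, heq⟩ := selInf_exists_min ihc ihex (hφc i) s
      refine ⟨u, ?_⟩
      show selTower ρ0 φ i s u + _ = 0
      rw [hu, heq, ENNReal.toReal_ofReal (hφnn i u), sub_self, abs_zero, add_zero]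

lemma selTower_zero
    (hnnAll : ∀ i s u, 0 ≤ selTower ρ0 φ i s u)
    {i : ℕ} {s : S} {u : U} (h : selTower ρ0 φ i s u = 0) :
    ρ0 s u = 0 ∧ ∀ j, j < i → φ j u = (selInf (selTower ρ0 φ j) (φ j) s).toReal := by
  induction i with
  | zero => exact ⟨h, fun j hj => absurd hj (Nat.not_lt_zero j)⟩
  | succ i ih =>
    have h' : selTower ρ0 φ i s u = 0 ∧
        |φ i u - (selInf (selTower ρ0 φ i) (φ i) s).toReal| = 0 :=
      (add_eq_zero_iff_of_nonneg (hnnAll i s u) (abs_nonneg _)).mp h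
    obtain ⟨h1, hpin⟩ := ih h'.1
    refine ⟨h1, fun j hj => ?_⟩
    rcases Nat.lt_succ_iff_lt_or_eq.mp hj with hj' | rfl
    · exact hpin j hj'
    · have := abs_eq_zero.mp h'.2
      linarith [sub_eq_zero.mp this]

end Sel

lemma coord_abs_le_norm {k : ℕ} (x : EuclideanSpace ℝ (Fin k)) (i : Fin k) : |x i| ≤ ‖x‖ := by
  rw [EuclideanSpace.norm_eq]
  have h1 : |x i| ^ 2 ≤ ∑ j, ‖x j‖ ^ 2 := by
    have := Finset.single_le_sum (f := fun j => ‖x j‖ ^ 2)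
      (fun j _ => by positivity) (Finset.mem_univ i)
    simpa [sq_abs, Real.norm_eq_abs] using this
  have := Real.sqrt_le_sqrt h1
  rwa [Real.sqrt_sq (abs_nonneg _)] at this

theorem aumannIntegral_eq_param_integrals
    (k : ℕ) (hk : 0 < k)
    (S : Type) [MetricSpace S] [CompactSpace S] [MeasurableSpace S] [BorelSpace S]
    (f : S × (closedBall (0 : Euc k) 1 : Set (Euc k)) → Euc k) (hf : Continuous f)
    (hconv : ∀ s : S, Convex ℝ {z : Euc k |
      ∃ u : (closedBall (0 : Euc k) 1 : Set (Euc k)), f (s, u) = z})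
    (μ : Measure S) (hμ : IsProbabilityMeasure μ) :
    aumannIntegral μ (fun s => {z : Euc k |
        ∃ u : (closedBall (0 : Euc k) 1 : Set (Euc k)), f (s, u) = z}) =
      {v : Euc k | ∃ ν : Measure (S × (closedBall (0 : Euc k) 1 : Set (Euc k))),
        IsProbabilityMeasure ν ∧ ν.map Prod.fst = μ ∧ (∫ q, f q ∂ν) = v} := by
  haveI : CompactSpace (closedBall (0 : Euc k) 1 : Set (Euc k)) :=
    isCompact_iff_compactSpace.mp (isCompact_closedBall _ _)
  haveI : Nonempty (closedBall (0 : Euc k) 1 : Set (Euc k)) :=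
    ⟨⟨0, mem_closedBall_self (by norm_num)⟩⟩
  haveI : PolishSpace (closedBall (0 : Euc k) 1 : Set (Euc k)) :=
    IsClosed.polishSpace isClosed_closedBall
  -- bound on f
  obtain ⟨C, hC⟩ : ∃ C, ∀ q, ‖f q‖ ≤ C := by
    obtain ⟨C, hC⟩ := (isCompact_range hf.norm).bddAbove
    exact ⟨C, fun q => hC ⟨q, rfl⟩⟩
  ext v
  simp only [aumannIntegral, Set.mem_setOf_eq]
  constructor
  · rintro ⟨g, hgm, hgi, hgF, rfl⟩
    set ρ0 : S → (closedBall (0 : Euc k) 1 : Set (Euc k)) → ℝ :=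
      fun s u => dist (f (s, u)) (g s) with hρ0
    have hm : ∀ u, Measurable fun s => ρ0 s u := fun u =>
      ((hf.comp (continuous_id.prodMk continuous_const)).measurable).dist hgm
    have hc : ∀ s, Continuous (ρ0 s) := fun s =>
      ((hf.comp (continuous_const.prodMk continuous_id)).dist continuous_const)
    have hnn : ∀ s u, 0 ≤ ρ0 s u := fun s u => dist_nonneg
    have hex : ∀ s, ∃ u, ρ0 s u = 0 := fun s => by
      obtain ⟨u, hu⟩ := hgF s
      exact ⟨u, by rw [hρ0]; simp [hu]⟩
    set φ : ℕ → (closedBall (0 : Euc k) 1 : Set (Euc k)) → ℝ :=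
      fun i u => (if h : i < k then u.val ⟨i, h⟩ else 0) + 1 with hφ
    have hφc : ∀ i, Continuous (φ i) := by
      intro i
      rw [hφ]
      by_cases h : i < k
      · simp only [dif_pos h]
        exact (((EuclideanSpace.proj (⟨i, h⟩ : Fin k)).continuous).comp
          continuous_subtype_val).add continuous_const
      · simp only [dif_neg h]
        exact continuous_const
    have hφnn : ∀ i u, 0 ≤ φ i u := by
      intro i u
      rw [hφ]
      by_cases h : i < k
      · simp only [dif_pos h]
        have h1 : |u.val ⟨i, h⟩| ≤ ‖u.val‖ := coord_abs_le_norm _ _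
        have h2 : ‖u.val‖ ≤ 1 := by
          have := u.property
          rwa [mem_closedBall_zero_iff] at this
        have := neg_abs_le (u.val ⟨i, h⟩)
        linarith
      · simp only [dif_neg h]; norm_num
    have inv := selTower_inv hm hc hnn hex hφc hφnn
    set θ : ℕ → S → ℝ :=
      fun i s => (selInf (selTower ρ0 φ i) (φ i) s).toReal with hθ
    have hθm : ∀ i, Measurable (θ i) := fun i =>
      (measurable_selInf (inv i).1 (inv i).2.1 (inv i).2.2.1 (inv i).2.2.2
        (hφc i) (hφnn i)).ennreal_toReal
    set w : S → Euc k :=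
      fun s => (EuclideanSpace.equiv (Fin k) ℝ).symm (fun i => θ i s - 1) with hw
    have hwm : Measurable w := by
      apply ((EuclideanSpace.equiv (Fin k) ℝ).symm.continuous.measurable).comp
      exact measurable_pi_lambda _ fun i => (hθm (i : ℕ)).sub measurable_const
    have hsel : ∀ s, ∃ u : (closedBall (0 : Euc k) 1 : Set (Euc k)),
        u.val = w s ∧ f (s, u) = g s := by
      intro s
      obtain ⟨u, hu⟩ := (inv k).2.2.2 s
      obtain ⟨h1, hpin⟩ := selTower_zero (fun i => (inv i).2.2.1) hu
      refine ⟨u, ?_, dist_eq_zero.mp h1⟩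
      ext i
      have hth : φ (i : ℕ) u = θ (i : ℕ) s := hpin i i.isLt
      have hφval : φ (i : ℕ) u = u.val i + 1 := by
        simp only [hφ, dif_pos i.isLt, Fin.eta]
      have hcoord : u.val i = θ (i : ℕ) s - 1 := by linarith
      rw [hcoord]
      rfl
    have hwmem : ∀ s, w s ∈ closedBall (0 : Euc k) 1 := fun s => by
      obtain ⟨u, hu1, -⟩ := hsel s
      exact hu1 ▸ u.property
    set sel : S → (closedBall (0 : Euc k) 1 : Set (Euc k)) :=
      fun s => ⟨w s, hwmem s⟩ with hselw
    have hselm : Measurable sel := hwm.subtype_mk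
    have hfeq : ∀ s, f (s, sel s) = g s := by
      intro s
      obtain ⟨u, hu1, hu2⟩ := hsel s
      have : sel s = u := Subtype.ext (by rw [hselw]; exact hu1.symm)
      rw [this]; exact hu2
    have hpm : Measurable fun s => (s, sel s) := measurable_id.prodMk hselm
    refine ⟨μ.map (fun s => (s, sel s)), Measure.isProbabilityMeasure_map hpm.aemeasurable, ?_, ?_⟩
    · rw [Measure.map_map measurable_fst hpm]
      simp [Function.comp_def]
    · rw [integral_map hpm.aemeasurable hf.aestronglyMeasurable]
      exact integral_congr_ae (Filter.Eventually.of_forall hfeq)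
  · rintro ⟨ν, hν, hmarg, rfl⟩
    haveI := hν
    have hfst : ν.fst = μ := by rw [Measure.fst]; exact hmarg
    set g : S → Euc k := fun s => ∫ u, f (s, u) ∂(ν.condKernel s) with hg
    have hmg : Measurable g :=
      (hf.stronglyMeasurable.integral_kernel_prod_right').measurable
    have hintf : ∀ (m : Measure (S × (closedBall (0 : Euc k) 1 : Set (Euc k))))
        [IsProbabilityMeasure m], Integrable f m := fun m _ =>
      (integrable_const C).mono' hf.aestronglyMeasurable
        (Filter.Eventually.of_forall fun q => hC q)
    have hgF : ∀ s, g s ∈ {z : Euc k |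
        ∃ u : (closedBall (0 : Euc k) 1 : Set (Euc k)), f (s, u) = z} := by
      intro s
      have hcl : IsClosed {z : Euc k |
          ∃ u : (closedBall (0 : Euc k) 1 : Set (Euc k)), f (s, u) = z} := by
        have : IsCompact (Set.range fun u : (closedBall (0 : Euc k) 1 : Set (Euc k)) =>
            f (s, u)) := isCompact_range (hf.comp (continuous_const.prodMk continuous_id))
        exact this.isClosed
      refine (hconv s).integral_mem hcl (Filter.Eventually.of_forall fun u => ⟨u, rfl⟩) ?_
      exact (integrable_const C).mono'
        ((hf.comp (continuous_const.prodMk continuous_id)).aestronglyMeasurable)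
        (Filter.Eventually.of_forall fun u => hC (s, u))
    have hgbound : ∀ s, ‖g s‖ ≤ C := by
      intro s
      rw [hg]
      calc ‖∫ u, f (s, u) ∂(ν.condKernel s)‖
          ≤ C * ((ν.condKernel s) Set.univ).toReal :=
            norm_integral_le_of_norm_le_const (Filter.Eventually.of_forall fun u => hC (s, u))
        _ = C := by simp
    have hgi : Integrable g μ :=
      (integrable_const C).mono' hmg.aestronglyMeasurable
        (Filter.Eventually.of_forall hgbound)
    refine ⟨g, hmg, hgi, hgF, ?_⟩
    have h2 : ∫ q, f q ∂ν = ∫ s, ∫ u, f (s, u) ∂(ν.condKernel s) ∂(ν.fst) := by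
      conv_lhs => rw [← ν.disintegrate ν.condKernel]
      exact Measure.integral_compProd (by rw [ν.disintegrate ν.condKernel]; exact hintf ν)
    rw [h2, hfst]
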